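/- Let K be a field of characteristic zero and f, g ∈ K[x₁,…,xₙ]. Then f and g are algebraically dependent over K if and only if all 2×2 Jacobian determinants J_{x_i,x_j}(f,g) = ∂f/∂x_i · ∂g/∂x_j − ∂f/∂x_j · ∂g/∂x_i vanish for all 1 ≤ i < j ≤ n. -/

import Mathlib

open MvPolynomial Finsupp

section P1

variable {K : Type} [CommRing K]

lemma my_coeff_pderiv {n : ℕ} (i : Fin n) (p : MvPolynomial (Fin n) K) (t : Fin n →₀ ℕ) :
    coeff t (pderiv i p) = ((t i : K) + 1) * coeff (t + Finsupp.single i 1) p := by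
  induction p using MvPolynomial.induction_on' with
  | add p q hp hq => simp [hp, hq, mul_add]
  | monomial s a =>
    rw [pderiv_monomial, coeff_monomial, coeff_monomial]
    by_cases h : s = t + Finsupp.single i 1
    · have h1 : s - Finsupp.single i 1 = t := by
        rw [h]; ext j; simp [Finsupp.tsub_apply, Finsupp.add_apply]
      have h2 : s i = t i + 1 := by
        rw [h]; simp [Finsupp.add_apply]
      rw [if_pos h1, if_pos h, h2]
      push_cast; ring
    · rw [if_neg h]
      by_cases h1 : s - Finsupp.single i 1 = t
      · rw [if_pos h1]
        have hsi : s i = 0 := by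
          by_contra hsi
          apply h
          ext j
          by_cases hj : j = i
          · subst hj
            have := congrArg (fun u => u j) h1
            simp only [Finsupp.tsub_apply, Finsupp.single_eq_same, Finsupp.add_apply] at *
            omega
          · have := congrArg (fun u => u j) h1
            simp only [Finsupp.tsub_apply, Finsupp.single_eq_of_ne' (Ne.symm hj),
              Finsupp.add_apply] at *
            omega
        simp [hsi]
      · rw [if_neg h1]; ring

lemma my_mem_support_of_pderiv {n : ℕ} {i : Fin n} {p : MvPolynomial (Fin n) K}
    {t : Fin n →₀ ℕ} (h : t ∈ (pderiv i p).support) :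
    t + Finsupp.single i 1 ∈ p.support := by
  rw [MvPolynomial.mem_support_iff] at h ⊢
  intro hc
  rw [my_coeff_pderiv, hc, mul_zero] at h
  exact h rfl

lemma my_degreeOf_pderiv_lt {n : ℕ} {i : Fin n} {p : MvPolynomial (Fin n) K}
    (h : MvPolynomial.degreeOf i p ≠ 0) :
    MvPolynomial.degreeOf i (pderiv i p) < MvPolynomial.degreeOf i p := by
  rw [MvPolynomial.degreeOf_lt_iff (Nat.pos_of_ne_zero h)]
  intro m hm
  have h2 := my_mem_support_of_pderiv hm
  have h3 : m i + 1 ≤ MvPolynomial.degreeOf i p := by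
    rw [MvPolynomial.degreeOf_eq_sup]
    have := Finset.le_sup (f := fun (m : Fin n →₀ ℕ) => m i) h2
    simpa using this
  omega

lemma my_degreeOf_eq_zero_of_pderiv [CharZero K] [NoZeroDivisors K] {n : ℕ} {i : Fin n}
    {p : MvPolynomial (Fin n) K} (h : pderiv i p = 0) :
    MvPolynomial.degreeOf i p = 0 := by
  by_contra hd
  have h1 : MvPolynomial.degreeOf i p < 1 := by
    rw [MvPolynomial.degreeOf_lt_iff Nat.one_pos]
    intro m hm
    by_contra hmi
    push_neg at hmi
    set t := m - Finsupp.single i 1 with ht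
    have hm1 : t + Finsupp.single i 1 = m := by
      ext j
      by_cases hj : j = i
      · subst hj; simp [ht, Finsupp.tsub_apply, Finsupp.add_apply]; omega
      · simp [ht, Finsupp.tsub_apply, Finsupp.add_apply,
          Finsupp.single_eq_of_ne' (Ne.symm hj)]
    have hc := my_coeff_pderiv i p t
    rw [h, hm1] at hc
    simp only [MvPolynomial.coeff_zero] at hc
    rw [MvPolynomial.mem_support_iff] at hm
    have hne : ((t i : K) + 1) ≠ 0 := by
      have h5 : (((t i + 1 : ℕ)) : K) ≠ 0 := Nat.cast_ne_zero.2 (by omega)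
      push_cast at h5
      exact h5
    rcases mul_eq_zero.1 hc.symm with h' | h'
    · exact hne h'
    · exact hm h'
  omega

lemma my_totalDegree_pderiv_lt {n : ℕ} {i : Fin n} {p : MvPolynomial (Fin n) K}
    (h : pderiv i p ≠ 0) :
    MvPolynomial.totalDegree (pderiv i p) < MvPolynomial.totalDegree p := by
  have hkey : ∀ t ∈ (pderiv i p).support,
      (t.sum fun _ e => e) < MvPolynomial.totalDegree p := by
    intro t ht
    have h2 := my_mem_support_of_pderiv ht
    have h3 := MvPolynomial.le_totalDegree h2
    have h4 : ((t + Finsupp.single i 1).sum fun _ e => e)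
        = (t.sum fun _ e => e) + 1 := by
      rw [Finsupp.sum_add_index (by simp) (by simp)]
      simp
    omega
  rw [MvPolynomial.totalDegree]
  obtain ⟨t0, ht0⟩ := (MvPolynomial.support_nonempty.2 h)
  have hpos : 0 < MvPolynomial.totalDegree p := lt_of_le_of_lt (Nat.zero_le _) (hkey t0 ht0)
  exact Finset.sup_lt_iff (by simpa using hpos) |>.2 hkey

lemma my_chain {m n : ℕ} (v : Fin m → MvPolynomial (Fin n) K)
    (P : MvPolynomial (Fin m) K) (i : Fin n) :
    pderiv i (MvPolynomial.aeval v P)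
      = ∑ k : Fin m, MvPolynomial.aeval v (pderiv k P) * pderiv i (v k) := by
  induction P using MvPolynomial.induction_on with
  | C a => simp
  | add p q hp hq =>
    rw [map_add, map_add, hp, hq, ← Finset.sum_add_distrib]
    exact Finset.sum_congr rfl fun k _ => by rw [map_add, map_add, add_mul]
  | mul_X p k hp =>
    rw [map_mul, MvPolynomial.aeval_X, pderiv_mul, hp]
    have hrhs : ∀ j : Fin m, MvPolynomial.aeval v (pderiv j (p * MvPolynomial.X k))
          * pderiv i (v j)
        = MvPolynomial.aeval v (pderiv j p) * pderiv i (v j) * v k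
          + (if k = j then MvPolynomial.aeval v p * pderiv i (v j) else 0) := by
      intro j
      rw [pderiv_mul, pderiv_X]
      by_cases hkj : k = j
      · subst hkj
        simp [map_add, map_mul, add_mul]
        ring
      · simp [hkj, Pi.single_eq_of_ne' hkj]
        ring
    rw [Finset.sum_congr rfl (fun j _ => hrhs j)]
    rw [Finset.sum_add_distrib, Finset.sum_ite_eq (Finset.univ) k
      (fun j => MvPolynomial.aeval v p * pderiv i (v j))]
    rw [Finset.sum_mul]
    simp only [Finset.mem_univ, if_true]
end P1

open MvPolynomial

lemma my_polyDep (K : Type) [Field K] (f g : Polynomial K) :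
    ∃ P : MvPolynomial (Fin 2) K, P ≠ 0 ∧ MvPolynomial.aeval ![f, g] P = 0 := by
  classical
  set D := max f.natDegree g.natDegree with hD
  set d := 2 * D + 1 with hd
  set N := 2 * d * D + 1 with hN
  -- the evaluation linear map
  let F : ((Fin (d+1) × Fin (d+1)) → K) →ₗ[K] Polynomial K :=
  { toFun := fun c => ∑ ab : Fin (d+1) × Fin (d+1),
      Polynomial.C (c ab) * f ^ (ab.1 : ℕ) * g ^ (ab.2 : ℕ)
    map_add' := by
      intro x y
      simp [add_mul, Finset.sum_add_distrib]
    map_smul' := by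
      intro r x
      simp only [Pi.smul_apply, smul_eq_mul, map_mul, RingHom.id_apply, Polynomial.smul_eq_C_mul,
        Finset.mul_sum]
      exact Finset.sum_congr rfl fun ab _ => by ring }
  have hmem : ∀ c, F c ∈ Polynomial.degreeLT K N := by
    intro c
    apply Submodule.sum_mem
    intro ab _
    rw [Polynomial.mem_degreeLT]
    have h1 : (Polynomial.C (c ab) * f ^ (ab.1 : ℕ) * g ^ (ab.2 : ℕ)).natDegree < N := by
      have hb1 : (f ^ (ab.1 : ℕ)).natDegree ≤ d * D := by
        refine le_trans (Polynomial.natDegree_pow_le) ?_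
        have : (ab.1 : ℕ) ≤ d := Nat.lt_succ_iff.1 ab.1.isLt
        exact Nat.mul_le_mul this (le_max_left _ _)
      have hb2 : (g ^ (ab.2 : ℕ)).natDegree ≤ d * D := by
        refine le_trans (Polynomial.natDegree_pow_le) ?_
        have : (ab.2 : ℕ) ≤ d := Nat.lt_succ_iff.1 ab.2.isLt
        exact Nat.mul_le_mul this (le_max_right _ _)
      have := Polynomial.natDegree_mul_le
        (p := Polynomial.C (c ab) * f ^ (ab.1 : ℕ)) (q := g ^ (ab.2 : ℕ))
      have h2 := Polynomial.natDegree_mul_le (p := Polynomial.C (c ab)) (q := f ^ (ab.1 : ℕ))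
      simp only [Polynomial.natDegree_C, zero_add] at h2
      have hrr : 2 * (d * D) = 2 * d * D := by ring
      omega
    calc (Polynomial.C (c ab) * f ^ (ab.1 : ℕ) * g ^ (ab.2 : ℕ)).degree
        ≤ ((Polynomial.C (c ab) * f ^ (ab.1 : ℕ) * g ^ (ab.2 : ℕ)).natDegree : WithBot ℕ) :=
          Polynomial.degree_le_natDegree
      _ < (N : WithBot ℕ) := by exact_mod_cast h1
  let G : ((Fin (d+1) × Fin (d+1)) → K) →ₗ[K] Polynomial.degreeLT K N :=
    F.codRestrict _ hmem
  haveI : Module.Finite K (Polynomial.degreeLT K N) :=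
    Module.Finite.equiv (Polynomial.degreeLTEquiv K N).symm
  have hnotinj : ¬ Function.Injective G := by
    intro hinj
    have hle := LinearMap.finrank_le_finrank_of_injective hinj
    rw [Module.finrank_fintype_fun_eq_card, (Polynomial.degreeLTEquiv K N).finrank_eq,
      Module.finrank_fintype_fun_eq_card] at hle
    simp only [Fintype.card_prod, Fintype.card_fin] at hle
    nlinarith [hle]
  -- get a nonzero kernel element
  rw [← LinearMap.ker_eq_bot] at hnotinj
  obtain ⟨c, hcker, hc0⟩ := Submodule.exists_mem_ne_zero_of_ne_bot hnotinj
  have hFc : F c = 0 := by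
    have := congrArg (Subtype.val) (LinearMap.mem_ker.1 hcker)
    simpa [G, LinearMap.codRestrict] using (LinearMap.mem_ker.1 hcker)
  -- build the MvPolynomial
  set e : (Fin (d+1) × Fin (d+1)) → (Fin 2 →₀ ℕ) := fun ab =>
    Finsupp.single 0 (ab.1 : ℕ) + Finsupp.single 1 (ab.2 : ℕ) with he
  have he_inj : Function.Injective e := by
    intro ab ab' h
    have h0 := congrArg (fun u => u (0 : Fin 2)) h
    have h1 := congrArg (fun u => u (1 : Fin 2)) h
    simp only [e, Finsupp.add_apply, Finsupp.single_eq_same,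
      Finsupp.single_eq_of_ne (show (0:Fin 2) ≠ 1 by decide),
      Finsupp.single_eq_of_ne (show (1:Fin 2) ≠ 0 by decide)] at h0 h1
    have : ab.1 = ab'.1 := Fin.ext (by omega)
    have h2 : ab.2 = ab'.2 := Fin.ext (by omega)
    exact Prod.ext this h2
  set P : MvPolynomial (Fin 2) K := ∑ ab : Fin (d+1) × Fin (d+1),
    MvPolynomial.monomial (e ab) (c ab) with hP
  obtain ⟨ab₀, hab₀⟩ : ∃ ab, c ab ≠ 0 := by
    by_contra hall
    push_neg at hall
    exact hc0 (funext hall)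
  refine ⟨P, ?_, ?_⟩
  · intro h0
    have hco : MvPolynomial.coeff (e ab₀) P = c ab₀ := by
      rw [hP, MvPolynomial.coeff_sum]
      rw [Finset.sum_eq_single ab₀]
      · simp [MvPolynomial.coeff_monomial]
      · intro ab _ hne
        rw [MvPolynomial.coeff_monomial, if_neg (fun hc => hne (he_inj hc))]
      · intro h; exact absurd (Finset.mem_univ _) h
    rw [h0] at hco
    simp at hco
    exact hab₀ hco.symm
  · have : MvPolynomial.aeval ![f, g] P = F c := by
      rw [hP, map_sum]
      refine Finset.sum_congr rfl fun ab _ => ?_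
      have : (MvPolynomial.monomial (Finsupp.single (0:Fin 2) (ab.1:ℕ)
          + Finsupp.single (1:Fin 2) (ab.2:ℕ)) (c ab))
          = MvPolynomial.C (c ab) * MvPolynomial.X 0 ^ (ab.1:ℕ)
            * MvPolynomial.X 1 ^ (ab.2:ℕ) := by
        rw [MvPolynomial.X_pow_eq_monomial, MvPolynomial.X_pow_eq_monomial,
          MvPolynomial.C_apply, MvPolynomial.monomial_mul, MvPolynomial.monomial_mul]
        simp
      rw [he, this]
      simp [Matrix.cons_val_zero, Matrix.cons_val_one, mul_assoc]
    rw [this, hFc]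
open MvPolynomial

noncomputable section

variable (K : Type) [Field K] (m : ℕ)

local notation "L" => FractionRing (Polynomial K)

/-- The map sending `X 0` to the constant `X` (as element of the fraction field of `K[X]`)
and `X i.succ` to `X i`. -/
def myPhi : MvPolynomial (Fin (m+1)) K →+* MvPolynomial (Fin m) L :=
  (MvPolynomial.map (algebraMap (Polynomial K) L)).comp
    (((MvPolynomial.renameEquiv K (_root_.finSuccEquiv m)).trans
      (MvPolynomial.optionEquivRight K (Fin m))).toRingEquiv.toRingHom)

variable {K m}

lemma myPhi_X_zero : myPhi K m (X 0) = C (algebraMap (Polynomial K) L Polynomial.X) := by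
  simp [myPhi, MvPolynomial.renameEquiv_apply, MvPolynomial.rename_X, finSuccEquiv_zero,
    MvPolynomial.optionEquivRight_X_none]

lemma myPhi_X_succ (i : Fin m) : myPhi K m (X i.succ) = X i := by
  simp [myPhi, MvPolynomial.renameEquiv_apply, MvPolynomial.rename_X, finSuccEquiv_succ,
    MvPolynomial.optionEquivRight_X_some]

lemma myPhi_C (a : K) : myPhi K m (C a) = C (algebraMap (Polynomial K) L (Polynomial.C a)) := by
  simp [myPhi, MvPolynomial.optionEquivRight_C]

lemma myPhi_injective : Function.Injective (myPhi K m) := by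
  apply Function.Injective.comp (g := MvPolynomial.map (algebraMap (Polynomial K) L))
  · exact MvPolynomial.map_injective _ (IsFractionRing.injective (Polynomial K) L)
  · exact (((MvPolynomial.renameEquiv K (_root_.finSuccEquiv m)).trans
      (MvPolynomial.optionEquivRight K (Fin m))).toRingEquiv).injective

lemma my_pderiv_comm {R S : Type} [CommRing R] [CommRing S] {a b : ℕ}
    (E : MvPolynomial (Fin a) R →+* MvPolynomial (Fin b) S) (j : Fin a) (i : Fin b)
    (hC : ∀ r, pderiv i (E (C r)) = 0)
    (hX : ∀ k, pderiv i (E (X k)) = E (pderiv j (X k))) (p : MvPolynomial (Fin a) R) :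
    pderiv i (E p) = E (pderiv j p) := by
  induction p using MvPolynomial.induction_on with
  | C r => rw [hC, pderiv_C, map_zero]
  | add p q hp hq => rw [map_add, map_add, map_add, hp, hq, map_add]
  | mul_X p k hp =>
    rw [map_mul, pderiv_mul, hp, hX, pderiv_mul, map_add, map_mul, map_mul]

lemma myPhi_pderiv (i : Fin m) (p : MvPolynomial (Fin (m+1)) K) :
    pderiv i (myPhi K m p) = myPhi K m (pderiv i.succ p) := by
  refine my_pderiv_comm _ i.succ i (fun r => ?_) (fun k => ?_) p
  · rw [myPhi_C, pderiv_C]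
  · rcases Fin.eq_zero_or_eq_succ k with hk | ⟨j, hj⟩
    · subst hk
      rw [myPhi_X_zero, pderiv_C, pderiv_X_of_ne (Ne.symm (Fin.succ_ne_zero i)), map_zero]
    · subst hj
      rw [myPhi_X_succ]
      by_cases hij : i = j
      · subst hij; rw [pderiv_X_self, pderiv_X_self, map_one]
      · rw [pderiv_X_of_ne (Ne.symm hij), pderiv_X_of_ne (by
          intro h
          exact hij (Fin.succ_injective _ h).symm), map_zero]

variable (K) in
def myTheta : MvPolynomial (Fin 2) (Polynomial K) ≃+* MvPolynomial (Fin 3) K :=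
  ((MvPolynomial.optionEquivRight K (Fin 2)).symm.trans
    (MvPolynomial.renameEquiv K (_root_.finSuccEquiv 2).symm)).toRingEquiv

lemma myTheta_X (k : Fin 2) : myTheta K (X k) = X k.succ := by
  have h1 : (MvPolynomial.optionEquivRight K (Fin 2)).symm (X k) = X (some k) := by
    rw [AlgEquiv.symm_apply_eq, MvPolynomial.optionEquivRight_X_some]
  simp [myTheta, h1, MvPolynomial.renameEquiv_apply, MvPolynomial.rename_X,
    finSuccEquiv_symm_some]

lemma myTheta_C_C (a : K) : myTheta K (C (Polynomial.C a)) = C a := by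
  have h1 : (MvPolynomial.optionEquivRight K (Fin 2)).symm (C (Polynomial.C a)) = C a := by
    rw [AlgEquiv.symm_apply_eq, MvPolynomial.optionEquivRight_C]
  simp [myTheta, h1]

lemma myTheta_C_X : myTheta K (C Polynomial.X) = X 0 := by
  have h1 : (MvPolynomial.optionEquivRight K (Fin 2)).symm (C Polynomial.X) = X none := by
    rw [AlgEquiv.symm_apply_eq, MvPolynomial.optionEquivRight_X_none]
  simp [myTheta, h1, MvPolynomial.renameEquiv_apply, MvPolynomial.rename_X,
    finSuccEquiv_symm_none]

lemma my_descend {K : Type} [Field K] {m : ℕ} (f g : MvPolynomial (Fin (m+1)) K)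
    (hdep : ∃ P' : MvPolynomial (Fin 2) (FractionRing (Polynomial K)), P' ≠ 0 ∧
      MvPolynomial.aeval ![myPhi K m f, myPhi K m g] P' = 0) :
    ∃ R : MvPolynomial (Fin 3) K, R ≠ 0 ∧
      MvPolynomial.aeval ![X 0, f, g] R = 0 := by
  classical
  obtain ⟨P', hP0, hPrel⟩ := hdep
  obtain ⟨b, hb⟩ := IsLocalization.exist_integer_multiples
    (nonZeroDivisors (Polynomial K)) P'.support (fun mm => MvPolynomial.coeff mm P')
  set β := algebraMap (Polynomial K) (FractionRing (Polynomial K)) (b : Polynomial K) with hβ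
  have hβ0 : β ≠ 0 := by
    have hbne : (b : Polynomial K) ≠ 0 := nonZeroDivisors.coe_ne_zero b
    simpa [hβ] using fun h => hbne (IsFractionRing.injective (Polynomial K) _ (by simp [h]))
  have hnum : ∀ x : {mm // mm ∈ P'.support}, ∃ a : Polynomial K,
      algebraMap (Polynomial K) (FractionRing (Polynomial K)) a
        = β * MvPolynomial.coeff x.1 P' := by
    intro x
    obtain ⟨a, ha⟩ := hb x.1 x.2
    exact ⟨a, by rw [ha, Algebra.smul_def, hβ]⟩
  choose num hnum' using hnum
  set Q : MvPolynomial (Fin 2) (Polynomial K) :=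
    ∑ x ∈ P'.support.attach, MvPolynomial.monomial x.1 (num x) with hQ
  have hψQ : MvPolynomial.map (algebraMap (Polynomial K) (FractionRing (Polynomial K))) Q
      = C β * P' := by
    rw [hQ, map_sum]
    conv_rhs => rw [P'.as_sum, Finset.mul_sum]
    rw [← Finset.sum_attach P'.support (fun mm => C β * MvPolynomial.monomial mm (coeff mm P'))]
    refine Finset.sum_congr rfl fun x _ => ?_
    rw [MvPolynomial.map_monomial, hnum', MvPolynomial.C_mul_monomial]
  have hQ0 : Q ≠ 0 := by
    obtain ⟨m₀, hm₀⟩ := MvPolynomial.support_nonempty.2 hP0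
    intro h0
    have hco : MvPolynomial.coeff m₀ Q = num ⟨m₀, hm₀⟩ := by
      rw [hQ, MvPolynomial.coeff_sum]
      rw [Finset.sum_eq_single (⟨m₀, hm₀⟩ : {mm // mm ∈ P'.support})]
      · simp [MvPolynomial.coeff_monomial]
      · intro x _ hne
        rw [MvPolynomial.coeff_monomial, if_neg (fun hc => hne (Subtype.ext hc))]
      · intro h; exact absurd (Finset.mem_attach _ _) h
    have hnum0 : num ⟨m₀, hm₀⟩ ≠ 0 := by
      intro hz
      have := hnum' ⟨m₀, hm₀⟩
      rw [hz, map_zero] at this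
      have hcoeff : MvPolynomial.coeff m₀ P' ≠ 0 := MvPolynomial.mem_support_iff.1 hm₀
      exact hcoeff (by
        rcases mul_eq_zero.1 this.symm with h' | h'
        · exact absurd h' hβ0
        · exact h')
    rw [h0] at hco
    simp at hco
    exact hnum0 hco.symm
  refine ⟨myTheta K Q, fun h0 => hQ0 (by
    have := (myTheta K).injective (h0.trans (map_zero _).symm)
    simpa using this), ?_⟩
  -- the key ring hom identity
  have H : (myPhi K m).comp
        ((MvPolynomial.aeval (R := K) ![X 0, f, g]).toRingHom.comp
          (myTheta K).toRingHom)
      = (MvPolynomial.aeval (R := FractionRing (Polynomial K))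
          ![myPhi K m f, myPhi K m g]).toRingHom.comp
        (MvPolynomial.map (algebraMap (Polynomial K) (FractionRing (Polynomial K)))) := by
    have hC1 : ∀ a : K,
        (myPhi K m) ((MvPolynomial.aeval (R := K) ![X 0, f, g]) ((myTheta K) (C (Polynomial.C a))))
          = (MvPolynomial.aeval (R := FractionRing (Polynomial K)) ![myPhi K m f, myPhi K m g])
              (MvPolynomial.map (algebraMap (Polynomial K) (FractionRing (Polynomial K)))
                (C (Polynomial.C a))) := by
      intro a
      rw [myTheta_C_C, MvPolynomial.map_C, MvPolynomial.aeval_C, MvPolynomial.aeval_C,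
        MvPolynomial.algebraMap_eq, MvPolynomial.algebraMap_eq, myPhi_C]
    have hC2 :
        (myPhi K m) ((MvPolynomial.aeval (R := K) ![X 0, f, g]) ((myTheta K) (C Polynomial.X)))
          = (MvPolynomial.aeval (R := FractionRing (Polynomial K)) ![myPhi K m f, myPhi K m g])
              (MvPolynomial.map (algebraMap (Polynomial K) (FractionRing (Polynomial K)))
                (C Polynomial.X)) := by
      rw [myTheta_C_X, MvPolynomial.map_C, MvPolynomial.aeval_C, MvPolynomial.algebraMap_eq]
      have : (MvPolynomial.aeval (R := K) ![X 0, f, g]) (X (0 : Fin 3)) = X 0 := by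
        rw [MvPolynomial.aeval_X]; rfl
      rw [this, myPhi_X_zero]
    apply MvPolynomial.ringHom_ext
    · intro p
      induction p using Polynomial.induction_on' with
      | add u v hu hv => simp only [map_add, hu, hv]
      | monomial i a =>
        rw [← Polynomial.C_mul_X_pow_eq_monomial,
          map_mul (MvPolynomial.C : Polynomial K →+* MvPolynomial (Fin 2) (Polynomial K)),
          map_pow (MvPolynomial.C : Polynomial K →+* MvPolynomial (Fin 2) (Polynomial K))]
        simp only [map_mul, map_pow, RingHom.coe_comp, Function.comp_apply,
          RingEquiv.toRingHom_eq_coe, RingHom.coe_coe, AlgHom.toRingHom_eq_coe,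
          AlgHom.coe_toRingHom]
        rw [hC1, hC2]
    · intro k
      simp only [RingHom.coe_comp, Function.comp_apply, RingEquiv.toRingHom_eq_coe,
        RingHom.coe_coe, AlgHom.toRingHom_eq_coe, AlgHom.coe_toRingHom]
      rw [MvPolynomial.map_X, myTheta_X, MvPolynomial.aeval_X, MvPolynomial.aeval_X]
      refine Fin.cases ?_ (fun j => ?_) k
      · rfl
      · rw [Fin.fin_one_eq_zero j]
        rfl
  have hfinal := RingHom.congr_fun H Q
  simp only [RingHom.coe_comp, Function.comp_apply, RingEquiv.toRingHom_eq_coe,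
    RingHom.coe_coe, AlgHom.toRingHom_eq_coe, AlgHom.coe_toRingHom] at hfinal
  rw [hψQ, map_mul, hPrel, mul_zero] at hfinal
  apply myPhi_injective (K := K) (m := m)
  rw [hfinal, map_zero]

section P4

variable {K : Type} [Field K]

lemma my_eq_C (P : MvPolynomial (Fin 2) K) (h0 : ∀ mm ∈ P.support, mm = 0) :
    P = C (coeff 0 P) := by
  classical
  have hsub : P.support ⊆ {0} := fun mm hmm => Finset.mem_singleton.2 (h0 mm hmm)
  rcases Finset.subset_singleton_iff.1 hsub with h | h
  · rw [MvPolynomial.support_eq_empty.1 h]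
    simp
  · conv_lhs => rw [P.as_sum, h]
    simp [MvPolynomial.monomial_zero']

lemma my_indep_slot0 {n : ℕ} (R : MvPolynomial (Fin (n+1)) K)
    (h : ∀ mm ∈ R.support, mm 0 = 0) :
    MvPolynomial.rename Fin.succ
      (MvPolynomial.aeval (Fin.cons 0 MvPolynomial.X : Fin (n+1) → MvPolynomial (Fin n) K) R)
      = R := by
  classical
  conv_rhs => rw [R.as_sum]
  conv_lhs => rw [R.as_sum]
  rw [map_sum, map_sum]
  refine Finset.sum_congr rfl fun mm hmm => ?_
  rw [MvPolynomial.aeval_monomial, map_mul]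
  have hC : (MvPolynomial.rename (Fin.succ : Fin n → Fin (n+1)))
      ((algebraMap K (MvPolynomial (Fin n) K)) (coeff mm R)) = C (coeff mm R) := by
    rw [MvPolynomial.algebraMap_eq, MvPolynomial.rename_C]
  rw [hC]
  rw [map_finsuppProd]
  have hprod : (mm.prod fun k e =>
      (MvPolynomial.rename (Fin.succ : Fin n → Fin (n+1)))
        ((Fin.cons 0 MvPolynomial.X : Fin (n+1) → MvPolynomial (Fin n) K) k ^ e))
      = mm.prod fun k e => (X k : MvPolynomial (Fin (n+1)) K) ^ e := by
    refine Finsupp.prod_congr fun k hk => ?_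
    have hk0 : k ≠ 0 := by
      intro hk0
      subst hk0
      exact (Finsupp.mem_support_iff.1 hk) (h mm hmm)
    obtain ⟨j, rfl⟩ := Fin.exists_succ_eq.2 hk0
    rw [Fin.cons_succ, map_pow, MvPolynomial.rename_X]
  rw [hprod, MvPolynomial.monomial_eq]

lemma my_finish {m : ℕ} [CharZero K] (f g : MvPolynomial (Fin (m+1)) K)
    (hminor : ∀ i j : Fin (m+1), i < j →
      pderiv i f * pderiv j g - pderiv j f * pderiv i g = 0)
    (hR : ∃ R : MvPolynomial (Fin 3) K, R ≠ 0 ∧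
      MvPolynomial.aeval ![MvPolynomial.X 0, f, g] R = 0) :
    ∃ P : MvPolynomial (Fin 2) K, P ≠ 0 ∧ MvPolynomial.aeval ![f, g] P = 0 := by
  classical
  set v₃ : Fin 3 → MvPolynomial (Fin (m+1)) K := ![MvPolynomial.X 0, f, g] with hv₃
  have hT : ∃ d : ℕ, ∃ R : MvPolynomial (Fin 3) K, R ≠ 0 ∧
      MvPolynomial.aeval v₃ R = 0 ∧ MvPolynomial.degreeOf 0 R = d := by
    obtain ⟨R, h1, h2⟩ := hR
    exact ⟨_, R, h1, h2, rfl⟩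
  obtain ⟨R, hR0, hRrel, hRdeg⟩ := Nat.find_spec hT
  by_cases hd0 : Nat.find hT = 0
  · -- R does not involve the slot-0 variable
    have hsup : ∀ mm ∈ R.support, mm 0 = 0 := by
      intro mm hmm
      have h1 : MvPolynomial.degreeOf 0 R < 1 := by rw [hRdeg, hd0]; exact Nat.one_pos
      have := (MvPolynomial.degreeOf_lt_iff Nat.one_pos).1 h1 mm hmm
      omega
    set q := MvPolynomial.aeval
      (Fin.cons 0 MvPolynomial.X : Fin 3 → MvPolynomial (Fin 2) K) R with hq
    have hkey := my_indep_slot0 R hsup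
    refine ⟨q, ?_, ?_⟩
    · intro h0
      rw [hq] at h0
      rw [h0, map_zero] at hkey
      exact hR0 hkey.symm
    · have h2 : MvPolynomial.aeval v₃ (MvPolynomial.rename Fin.succ q)
          = MvPolynomial.aeval (v₃ ∘ Fin.succ) q := MvPolynomial.aeval_rename _ _ _
      rw [hkey, hRrel] at h2
      have hcomp : v₃ ∘ Fin.succ = ![f, g] := by
        funext k
        refine Fin.cases rfl (fun j => ?_) k
        rw [Fin.fin_one_eq_zero j]
        rfl
      rw [hcomp] at h2
      exact h2.symm
  · -- minimal-degree relation with positive degree in slot 0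
    set a := MvPolynomial.aeval v₃ (pderiv 0 R) with hadef
    set b := MvPolynomial.aeval v₃ (pderiv 1 R) with hbdef
    set c := MvPolynomial.aeval v₃ (pderiv 2 R) with hcdef
    have ha : a ≠ 0 := by
      intro h0
      have hp0 : pderiv 0 R ≠ 0 := by
        intro hz
        exact hd0 (hRdeg ▸ my_degreeOf_eq_zero_of_pderiv hz)
      have hlt : MvPolynomial.degreeOf 0 (pderiv 0 R) < Nat.find hT := by
        rw [← hRdeg]
        exact my_degreeOf_pderiv_lt (by rw [hRdeg]; exact hd0)
      exact Nat.find_min hT hlt ⟨pderiv 0 R, hp0, h0, rfl⟩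
    have hchain : ∀ i : Fin (m+1),
        a * pderiv i (MvPolynomial.X 0 : MvPolynomial (Fin (m+1)) K)
          + b * pderiv i f + c * pderiv i g = 0 := by
      intro i
      have := my_chain v₃ R i
      rw [hRrel, map_zero, Fin.sum_univ_three] at this
      have e0 : v₃ 0 = MvPolynomial.X 0 := rfl
      have e1 : v₃ 1 = f := rfl
      have e2 : v₃ 2 = g := rfl
      rw [e0, e1, e2] at this
      rw [hadef, hbdef, hcdef]
      linear_combination -this
    have hzero : ∀ i : Fin (m+1), i ≠ 0 → pderiv i f = 0 ∧ pderiv i g = 0 := by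
      intro i hi
      have hEi : b * pderiv i f + c * pderiv i g = 0 := by
        have := hchain i
        rw [pderiv_X_of_ne (Ne.symm hi), mul_zero, zero_add] at this
        exact this
      have hE0 : a + b * pderiv 0 f + c * pderiv 0 g = 0 := by
        have := hchain 0
        rw [pderiv_X_self, mul_one] at this
        exact this
      have hmin : pderiv 0 f * pderiv i g - pderiv i f * pderiv 0 g = 0 :=
        hminor 0 i (Fin.pos_iff_ne_zero.2 hi)
      have hgi : pderiv i g = 0 := by
        have h1 : a * pderiv i g = 0 := by
          linear_combination (pderiv i g) * hE0 - b * hmin - (pderiv 0 g) * hEi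
        rcases mul_eq_zero.1 h1 with h | h
        · exact absurd h ha
        · exact h
      have hfi : pderiv i f = 0 := by
        have h1 : a * pderiv i f = 0 := by
          linear_combination (pderiv i f) * hE0 + c * hmin - (pderiv 0 f) * hEi
        rcases mul_eq_zero.1 h1 with h | h
        · exact absurd h ha
        · exact h
      exact ⟨hfi, hgi⟩
    -- f and g are univariate polynomials in X 0
    have hrange : ∀ p : MvPolynomial (Fin (m+1)) K, (∀ i : Fin (m+1), i ≠ 0 → pderiv i p = 0) →
        ∃ p₁ : Polynomial K,
          Polynomial.aeval (MvPolynomial.X 0 : MvPolynomial (Fin (m+1)) K) p₁ = p := by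
      intro p hp
      have hvars : (p.vars : Set (Fin (m+1))) ⊆ {0} := by
        intro i hi
        simp only [Set.mem_singleton_iff]
        by_contra hne
        have hdeg := my_degreeOf_eq_zero_of_pderiv (hp i hne)
        obtain ⟨mm, hmm, hims⟩ := (MvPolynomial.mem_vars i).1 (by exact_mod_cast hi)
        have hlt : MvPolynomial.degreeOf i p < 1 := by rw [hdeg]; exact Nat.one_pos
        have := (MvPolynomial.degreeOf_lt_iff Nat.one_pos).1 hlt mm hmm
        exact (Finsupp.mem_support_iff.1 hims) (by omega)
      have hsupp : p ∈ MvPolynomial.supported K ({0} : Set (Fin (m+1))) :=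
        (MvPolynomial.mem_supported).2 hvars
      rw [MvPolynomial.supported_eq_adjoin_X, Set.image_singleton,
        Algebra.adjoin_singleton_eq_range_aeval] at hsupp
      obtain ⟨p₁, hp₁⟩ := hsupp
      exact ⟨p₁, hp₁⟩
    obtain ⟨f₁, hf₁⟩ := hrange f (fun i hi => (hzero i hi).1)
    obtain ⟨g₁, hg₁⟩ := hrange g (fun i hi => (hzero i hi).2)
    obtain ⟨P, hP0, hPrel⟩ := my_polyDep K f₁ g₁
    refine ⟨P, hP0, ?_⟩
    have hcomp := MvPolynomial.comp_aeval
      (f := ![f₁, g₁])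
      (φ := Polynomial.aeval (MvPolynomial.X 0 : MvPolynomial (Fin (m+1)) K))
    have happ := congrArg (fun (φ : MvPolynomial (Fin 2) K →ₐ[K] MvPolynomial (Fin (m+1)) K)
      => φ P) hcomp
    simp only [AlgHom.coe_comp, Function.comp_apply] at happ
    rw [hPrel, map_zero] at happ
    have hfun : (fun i => Polynomial.aeval
        (MvPolynomial.X 0 : MvPolynomial (Fin (m+1)) K) (![f₁, g₁] i)) = ![f, g] := by
      funext k
      refine Fin.cases ?_ (fun j => ?_) k
      · exact hf₁
      · rw [Fin.fin_one_eq_zero j]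
        exact hg₁
    rw [hfun] at happ
    exact happ.symm

end P4

section P5

variable {K : Type} [Field K]

lemma my_easy {n : ℕ} [CharZero K] (f g : MvPolynomial (Fin n) K)
    (h : ∃ P : MvPolynomial (Fin 2) K, P ≠ 0 ∧ MvPolynomial.aeval ![f, g] P = 0)
    (i j : Fin n) (hij : i < j) :
    pderiv i f * pderiv j g - pderiv j f * pderiv i g = 0 := by
  classical
  have hT : ∃ d : ℕ, ∃ P : MvPolynomial (Fin 2) K, P ≠ 0 ∧
      MvPolynomial.aeval ![f, g] P = 0 ∧ MvPolynomial.totalDegree P = d := by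
    obtain ⟨P, h1, h2⟩ := h
    exact ⟨_, P, h1, h2, rfl⟩
  obtain ⟨P, hP0, hPrel, hPdeg⟩ := Nat.find_spec hT
  set b := MvPolynomial.aeval ![f, g] (pderiv 0 P) with hbdef
  set c := MvPolynomial.aeval ![f, g] (pderiv 1 P) with hcdef
  have hchain : ∀ k : Fin n, b * pderiv k f + c * pderiv k g = 0 := by
    intro k
    have := my_chain ![f, g] P k
    rw [hPrel, map_zero, Fin.sum_univ_two] at this
    have e0 : (![f, g] : Fin 2 → MvPolynomial (Fin n) K) 0 = f := rfl
    have e1 : (![f, g] : Fin 2 → MvPolynomial (Fin n) K) 1 = g := rfl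
    rw [e0, e1] at this
    rw [hbdef, hcdef]
    linear_combination -this
  have hbc : b ≠ 0 ∨ c ≠ 0 := by
    by_contra hcon
    push_neg at hcon
    obtain ⟨hb0, hc0⟩ := hcon
    have hp : ∀ k : Fin 2, MvPolynomial.aeval ![f, g] (pderiv k P) = 0 → pderiv k P = 0 := by
      intro k hk
      by_contra hne
      exact Nat.find_min hT (hPdeg ▸ my_totalDegree_pderiv_lt hne) ⟨pderiv k P, hne, hk, rfl⟩
    have hp0 := hp 0 hb0
    have hp1 := hp 1 hc0
    have hdeg0 := my_degreeOf_eq_zero_of_pderiv hp0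
    have hdeg1 := my_degreeOf_eq_zero_of_pderiv hp1
    have hmm : ∀ mm ∈ P.support, mm = (0 : Fin 2 →₀ ℕ) := by
      intro mm hmm
      have h0 := (MvPolynomial.degreeOf_lt_iff Nat.one_pos).1 (by
        rw [hdeg0]; exact Nat.one_pos) mm hmm
      have h1 := (MvPolynomial.degreeOf_lt_iff Nat.one_pos).1 (by
        rw [hdeg1]; exact Nat.one_pos) mm hmm
      ext k
      refine Fin.cases ?_ (fun jj => ?_) k
      · simpa using Nat.lt_one_iff.1 h0
      · rw [Fin.fin_one_eq_zero jj]
        simpa using Nat.lt_one_iff.1 h1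
    have hPC := my_eq_C P hmm
    rw [hPC] at hPrel
    rw [MvPolynomial.aeval_C] at hPrel
    have hco : MvPolynomial.coeff 0 P = 0 :=
      (algebraMap K (MvPolynomial (Fin n) K)).injective (by rw [hPrel, map_zero])
    rw [hPC, hco, map_zero] at hP0
    exact hP0 rfl
  rcases hbc with hb | hc
  · have hkey : b * (pderiv i f * pderiv j g - pderiv j f * pderiv i g) = 0 := by
      linear_combination (pderiv j g) * hchain i - (pderiv i g) * hchain j
    rcases mul_eq_zero.1 hkey with h' | h'
    · exact absurd h' hb
    · exact h'
  · have hkey : c * (pderiv i f * pderiv j g - pderiv j f * pderiv i g) = 0 := by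
      linear_combination (pderiv i f) * hchain j - (pderiv j f) * hchain i
    rcases mul_eq_zero.1 hkey with h' | h'
    · exact absurd h' hc
    · exact h'

end P5

lemma my_hard : ∀ (n : ℕ) (K : Type) [Field K] [CharZero K]
    (f g : MvPolynomial (Fin n) K),
    (∀ i j : Fin n, i < j → pderiv i f * pderiv j g - pderiv j f * pderiv i g = 0) →
    ∃ P : MvPolynomial (Fin 2) K, P ≠ 0 ∧ MvPolynomial.aeval ![f, g] P = 0 := by
  intro n
  induction n with
  | zero =>
    intro K _ _ f g _
    refine ⟨MvPolynomial.X 0 - C (f.coeff 0), ?_, ?_⟩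
    · intro h0
      have := congrArg (MvPolynomial.aeval
        (![f.coeff 0 + 1, 0] : Fin 2 → K)) h0
      rw [map_sub, MvPolynomial.aeval_X, MvPolynomial.aeval_C, map_zero] at this
      have h2 : (![f.coeff 0 + 1, 0] : Fin 2 → K) 0 = f.coeff 0 + 1 := rfl
      rw [h2] at this
      simp at this
    · rw [map_sub, MvPolynomial.aeval_X, MvPolynomial.aeval_C]
      have h2 : (![f, g] : Fin 2 → MvPolynomial (Fin 0) K) 0 = f := rfl
      rw [h2, sub_eq_zero, MvPolynomial.algebraMap_eq]
      exact MvPolynomial.eq_C_of_isEmpty f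
  | succ m ih =>
    intro K _ _ f g hminor
    haveI : CharZero (FractionRing (Polynomial K)) := by
      have hinj : Function.Injective
          ((algebraMap (Polynomial K) (FractionRing (Polynomial K))).comp
            (Polynomial.C : K →+* Polynomial K)) :=
        (IsFractionRing.injective (Polynomial K) _).comp Polynomial.C_injective
      exact charZero_of_injective_ringHom hinj
    apply my_finish f g hminor
    apply my_descend f g
    apply ih (FractionRing (Polynomial K)) (myPhi K m f) (myPhi K m g)
    intro i j hij
    rw [myPhi_pderiv, myPhi_pderiv, myPhi_pderiv, myPhi_pderiv, ← map_mul, ← map_mul, ← map_sub,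
      hminor i.succ j.succ (Fin.succ_lt_succ_iff.2 hij), map_zero]

/-- Jacobian criterion for algebraic dependence of two polynomials in
characteristic zero. -/
theorem algebraicallyDependent_iff_jacobians_vanish
    (K : Type) [Field K] [CharZero K] (n : ℕ) (f g : MvPolynomial (Fin n) K) :
    (∃ P : MvPolynomial (Fin 2) K, P ≠ 0 ∧ MvPolynomial.aeval ![f, g] P = 0) ↔
      (∀ i j : Fin n, i < j →
        MvPolynomial.pderiv i f * MvPolynomial.pderiv j g -
          MvPolynomial.pderiv j f * MvPolynomial.pderiv i g = 0) := by
  constructor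
  · intro h i j hij
    exact my_easy f g h i j hij
  · intro h
    exact my_hard n K f g h
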